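/- Let n ≥ 1, let N be a Hermitian positive definite n×n complex matrix, let N¹, N², N³ be Hermitian n×n complex matrices, and let I₀ be a Hermitian positive semidefinite n×n complex matrix. Assume Condition (3): for every μ ∈ ℂ and every n̂ ∈ ℝ³ with |n̂| = 1, the only vector ψ ∈ ℂⁿ satisfying I₀ψ = 0 and (μN + i·N(n̂))ψ = 0 is ψ = 0. Define, for k ∈ ℤ³, the matrix A(k) = N⁻¹·(i·N(k) − I₀). Then there exists δ > 0 such that: (a) for every k ∈ ℤ³ with k ≠ 0, every eigenvalue λ of A(k) satisfies Re λ ≤ −δ; and (b) every eigenvalue λ of A(0) = −N⁻¹I₀ is either equal to 0 or is real with λ ≤ −δ. -/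
import Mathlib


open Matrix
open scoped ComplexOrder

/-- `N(k)` for an integer covector `k`. -/
noncomputable def symbolZ {n : ℕ} (N1 N2 N3 : Matrix (Fin n) (Fin n) ℂ)
    (k : Fin 3 → ℤ) : Matrix (Fin n) (Fin n) ℂ :=
  (k 0 : ℂ) • N1 + (k 1 : ℂ) • N2 + (k 2 : ℂ) • N3

/-- quadratic form of a Hermitian matrix is real -/
lemma quad_im_zero {n : ℕ} {M : Matrix (Fin n) (Fin n) ℂ} (hM : M.IsHermitian)
    (x : Fin n → ℂ) : (star x ⬝ᵥ M *ᵥ x).im = 0 := by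
  rw [← Complex.conj_eq_iff_im]
  have h1 : (starRingEnd ℂ) (star x ⬝ᵥ M *ᵥ x) = star (star x ⬝ᵥ M *ᵥ x) := rfl
  rw [h1, ← star_dotProduct_star, star_star, star_mulVec, ← dotProduct_mulVec, hM.eq]

lemma quad_bound {n : ℕ} (M : Matrix (Fin n) (Fin n) ℂ) (x : Fin n → ℂ) :
    ‖star x ⬝ᵥ M *ᵥ x‖ ≤ (∑ i, ∑ j, ‖M i j‖) * (‖x‖ * ‖x‖) := by
  rw [dotProduct]
  calc ‖∑ i, star x i * (M *ᵥ x) i‖ ≤ ∑ i, ‖star x i * (M *ᵥ x) i‖ :=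
        norm_sum_le _ _
    _ ≤ ∑ i, ∑ j, ‖M i j‖ * (‖x‖ * ‖x‖) := by
        refine Finset.sum_le_sum fun i _ => ?_
        rw [norm_mul, Matrix.mulVec, dotProduct]
        calc ‖star x i‖ * ‖∑ j, M i j * x j‖
            ≤ ‖x‖ * ∑ j, ‖M i j‖ * ‖x‖ := by
              apply mul_le_mul
              · simpa using norm_le_pi_norm x i
              · refine (norm_sum_le _ _).trans (Finset.sum_le_sum fun j _ => ?_)
                rw [norm_mul]
                exact mul_le_mul_of_nonneg_left (norm_le_pi_norm x j) (norm_nonneg _)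
              · exact norm_nonneg _
              · exact norm_nonneg _
          _ = ∑ j, ‖M i j‖ * (‖x‖ * ‖x‖) := by
              rw [Finset.mul_sum]; exact Finset.sum_congr rfl fun j _ => by ring
    _ = (∑ i, ∑ j, ‖M i j‖) * (‖x‖ * ‖x‖) := by
        rw [Finset.sum_mul]
        exact Finset.sum_congr rfl fun i _ => (Finset.sum_mul _ _ _).symm

lemma continuous_quad {n : ℕ} (M : Matrix (Fin n) (Fin n) ℂ) :
    Continuous fun x : Fin n → ℂ => star x ⬝ᵥ M *ᵥ x := by
  simp only [dotProduct, Matrix.mulVec, Pi.star_apply]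
  exact continuous_finset_sum _ fun i _ =>
    ((continuous_apply i).star.mul
      (continuous_finset_sum _ fun j _ => continuous_const.mul (continuous_apply j)))

lemma continuous_mulVec' {n m : ℕ} (M : Matrix (Fin n) (Fin m) ℂ) :
    Continuous fun x : Fin m → ℂ => M *ᵥ x := by
  apply continuous_pi fun i => ?_
  simp only [Matrix.mulVec, dotProduct]
  exact continuous_finset_sum _ fun j _ => continuous_const.mul (continuous_apply j)

lemma herm_smul {n : ℕ} {M : Matrix (Fin n) (Fin n) ℂ} (hM : M.IsHermitian) {c : ℂ}
    (hc : star c = c) : (c • M).IsHermitian := by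
  unfold Matrix.IsHermitian at *
  rw [conjTranspose_smul, hc, hM]

/-- The real-part / imaginary-part identities for an eigenpair of the weighted problem. -/
lemma eig_parts {n : ℕ} {S NN II : Matrix (Fin n) (Fin n) ℂ} (hS : S.IsHermitian)
    (hNN : NN.IsHermitian) (hII : II.IsHermitian) {lam : ℂ} {φ : Fin n → ℂ}
    (h : (Complex.I • S - II) *ᵥ φ = lam • (NN *ᵥ φ)) :
    lam.re * (star φ ⬝ᵥ NN *ᵥ φ).re = -(star φ ⬝ᵥ II *ᵥ φ).re ∧
    lam.im * (star φ ⬝ᵥ NN *ᵥ φ).re = (star φ ⬝ᵥ S *ᵥ φ).re := by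
  have hqS := quad_im_zero hS φ
  have hqN := quad_im_zero hNN φ
  have hqI := quad_im_zero hII φ
  have hz : Complex.I * (star φ ⬝ᵥ S *ᵥ φ) - (star φ ⬝ᵥ II *ᵥ φ)
      = lam * (star φ ⬝ᵥ NN *ᵥ φ) := by
    have := congrArg (fun v => star φ ⬝ᵥ v) h
    simpa [Matrix.sub_mulVec, Matrix.smul_mulVec, dotProduct_sub,
      dotProduct_smul, smul_eq_mul] using this
  have h1 := congrArg Complex.re hz
  have h2 := congrArg Complex.im hz
  simp only [Complex.sub_re, Complex.sub_im, Complex.mul_re, Complex.mul_im,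
    Complex.I_re, Complex.I_im, hqS, hqN, hqI, zero_mul, one_mul, mul_zero,
    zero_sub, sub_zero, add_zero, zero_add] at h1 h2
  constructor
  · linarith
  · linarith

set_option maxHeartbeats 2000000 in
/-- The relaxed stability eigenvalue condition for the Fourier symbol
`A(k) = N⁻¹(i N(k) − I₀)`: under Condition (3) there is `δ > 0` such that all
eigenvalues at nonzero integer frequencies have real part `≤ −δ`, and every
eigenvalue of `A(0) = −N⁻¹I₀` is either `0` or real and `≤ −δ`. -/
theorem relaxed_stability_eigenvalue_condition
    (n : ℕ) (hn : 1 ≤ n)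
    (N N1 N2 N3 I0 : Matrix (Fin n) (Fin n) ℂ)
    (hN : N.PosDef)
    (hN1 : N1.IsHermitian) (hN2 : N2.IsHermitian) (hN3 : N3.IsHermitian)
    (hI0 : I0.PosSemidef)
    (hcond3 : ∀ (μ : ℂ) (nh : EuclideanSpace ℝ (Fin 3)), ‖nh‖ = 1 →
      ∀ ψ : Fin n → ℂ, I0 *ᵥ ψ = 0 →
        (μ • N + Complex.I • ((nh 0 : ℂ) • N1 + (nh 1 : ℂ) • N2 + (nh 2 : ℂ) • N3))
          *ᵥ ψ = 0 → ψ = 0)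
    (A : (Fin 3 → ℤ) → Matrix (Fin n) (Fin n) ℂ)
    (hA : ∀ k, A k = N⁻¹ * (Complex.I • symbolZ N1 N2 N3 k - I0)) :
    ∃ δ > (0 : ℝ),
      (∀ (k : Fin 3 → ℤ), k ≠ 0 → ∀ lam : ℂ,
        (∃ φ : Fin n → ℂ, φ ≠ 0 ∧ A k *ᵥ φ = lam • φ) → lam.re ≤ -δ) ∧
      (∀ lam : ℂ, (∃ φ : Fin n → ℂ, φ ≠ 0 ∧ A 0 *ᵥ φ = lam • φ) →
        lam = 0 ∨ (lam.im = 0 ∧ lam.re ≤ -δ)) := by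
  classical
  have hdet : IsUnit N.det := hN.det_pos.ne'.isUnit
  -- N-weighted eigenvalue equation
  have hweight : ∀ (k : Fin 3 → ℤ) (lam : ℂ) (φ : Fin n → ℂ),
      A k *ᵥ φ = lam • φ →
      (Complex.I • symbolZ N1 N2 N3 k - I0) *ᵥ φ = lam • (N *ᵥ φ) := by
    intro k lam φ h
    have h2 := congrArg (fun v => N *ᵥ v) h
    simp only [hA, Matrix.mulVec_mulVec, Matrix.mulVec_smul] at h2
    rwa [← Matrix.mul_assoc, Matrix.mul_nonsing_inv _ hdet, Matrix.one_mul] at h2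
  -- Hermitian symbols
  have hSherm : ∀ k : Fin 3 → ℤ, (symbolZ N1 N2 N3 k).IsHermitian := by
    intro k
    exact ((herm_smul hN1 (by simp)).add (herm_smul hN2 (by simp))).add
      (herm_smul hN3 (by simp))
  -- positivity facts
  have hqNpos : ∀ φ : Fin n → ℂ, φ ≠ 0 → 0 < (star φ ⬝ᵥ N *ᵥ φ).re := by
    intro φ hφ
    simpa using hN.re_dotProduct_pos hφ
  have hqInn : ∀ φ : Fin n → ℂ, 0 ≤ (star φ ⬝ᵥ I0 *ᵥ φ).re := by
    intro φ
    simpa using hI0.re_dotProduct_nonneg φ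
  -- basic eigenvalue facts at any frequency
  have hbasic : ∀ (k : Fin 3 → ℤ) (lam : ℂ) (φ : Fin n → ℂ), φ ≠ 0 →
      A k *ᵥ φ = lam • φ → lam.re ≤ 0 := by
    intro k lam φ hφ h
    have h1 := (eig_parts (hSherm k) hN.1 hI0.1 (hweight k lam φ h)).1
    nlinarith [hqNpos φ hφ, hqInn φ]
  -- Part (b): the zero-frequency eigenvalues
  have hS0 : symbolZ N1 N2 N3 (0 : Fin 3 → ℤ) = 0 := by
    simp [symbolZ]
  have hb : ∀ lam : ℂ, (∃ φ : Fin n → ℂ, φ ≠ 0 ∧ A 0 *ᵥ φ = lam • φ) →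
      lam.im = 0 ∧ lam.re ≤ 0 ∧ (lam ≠ 0 → lam.re < 0) := by
    intro lam ⟨φ, hφ, h⟩
    obtain ⟨h1, h2⟩ := eig_parts (hSherm 0) hN.1 hI0.1 (hweight 0 lam φ h)
    rw [hS0] at h2
    simp only [Matrix.zero_mulVec, dotProduct_zero, Complex.zero_re] at h2
    have hN' := hqNpos φ hφ
    have him : lam.im = 0 := by
      rcases mul_eq_zero.mp h2 with h | h
      · exact h
      · exact absurd h hN'.ne'
    refine ⟨him, ?_, ?_⟩
    · nlinarith [hqInn φ]
    · intro hne
      rcases lt_or_eq_of_le (show lam.re ≤ 0 by nlinarith [hqInn φ]) with h | h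
      · exact h
      · exact absurd (Complex.ext h him) hne
  -- finiteness of the zero-frequency spectrum
  have hE0fin : {lam : ℂ | ∃ φ : Fin n → ℂ, φ ≠ 0 ∧ A 0 *ᵥ φ = lam • φ}.Finite := by
    apply Set.Finite.subset (Module.End.finite_hasEigenvalue (Matrix.toLin' (A 0)))
    rintro lam ⟨φ, hφ, h⟩
    exact Module.End.hasEigenvalue_of_hasEigenvector
      ⟨Module.End.mem_eigenspace_iff.mpr (by rw [Matrix.toLin'_apply]; exact h), hφ⟩
  -- δ₀ for part (b)
  have hδ0 : ∃ δ0 > (0:ℝ), ∀ lam : ℂ, (∃ φ : Fin n → ℂ, φ ≠ 0 ∧ A 0 *ᵥ φ = lam • φ) →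
      lam ≠ 0 → lam.re ≤ -δ0 := by
    set F : Finset ℝ := (hE0fin.toFinset.filter (fun l => l ≠ 0)).image Complex.re with hF
    by_cases hFne : F.Nonempty
    · refine ⟨-(F.max' hFne), ?_, ?_⟩
      · have hlt : F.max' hFne < 0 := by
          obtain ⟨lam, hlamm, hrre⟩ := Finset.mem_image.mp (F.max'_mem hFne)
          obtain ⟨hmem, hne⟩ := Finset.mem_filter.mp hlamm
          rw [← hrre]
          exact (hb lam (hE0fin.mem_toFinset.mp hmem)).2.2 hne
        linarith
      · intro lam hlam hne
        have hmem : lam.re ∈ F := Finset.mem_image.mpr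
          ⟨lam, Finset.mem_filter.mpr ⟨hE0fin.mem_toFinset.mpr hlam, hne⟩, rfl⟩
        have := F.le_max' _ hmem
        linarith
    · refine ⟨1, one_pos, ?_⟩
      intro lam hlam hne
      exact absurd ⟨lam.re, Finset.mem_image.mpr
        ⟨lam, Finset.mem_filter.mpr ⟨hE0fin.mem_toFinset.mpr hlam, hne⟩, rfl⟩⟩ hFne
  -- δ₁ for part (a)
  have hδ1 : ∃ δ1 > (0:ℝ), ∀ (k : Fin 3 → ℤ), k ≠ 0 → ∀ (lam : ℂ) (φ : Fin n → ℂ),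
      φ ≠ 0 → A k *ᵥ φ = lam • φ → lam.re ≤ -δ1 := by
    -- minimum of the N-form on the unit sphere
    have hnonempty : (Metric.sphere (0 : Fin n → ℂ) 1).Nonempty := by
      refine ⟨Pi.single ⟨0, hn⟩ 1, ?_⟩
      rw [mem_sphere_zero_iff_norm, Pi.norm_single, norm_one]
    obtain ⟨ψ0, hψ0, hminOn⟩ := (isCompact_sphere (0 : Fin n → ℂ) 1).exists_isMinOn
      hnonempty ((Complex.continuous_re.comp (continuous_quad N)).continuousOn)
    set c : ℝ := (star ψ0 ⬝ᵥ N *ᵥ ψ0).re with hcdef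
    have hψ0ne : ψ0 ≠ 0 := by
      intro h
      rw [h, mem_sphere_zero_iff_norm, norm_zero] at hψ0
      exact zero_ne_one hψ0
    have hcpos : 0 < c := hqNpos ψ0 hψ0ne
    have hcle : ∀ ψ : Fin n → ℂ, ‖ψ‖ = 1 → c ≤ (star ψ ⬝ᵥ N *ᵥ ψ).re := by
      intro ψ h
      exact isMinOn_iff.mp hminOn ψ (by rwa [mem_sphere_zero_iff_norm])
    by_contra hcon
    push_neg at hcon
    -- extract a sequence of normalized eigenpairs with Re lam → 0
    have hseq : ∀ j : ℕ, ∃ (k : Fin 3 → ℤ) (lam : ℂ) (φ : Fin n → ℂ),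
        k ≠ 0 ∧ ‖φ‖ = 1 ∧ A k *ᵥ φ = lam • φ ∧ -(1/(j+1 : ℝ)) < lam.re := by
      intro j
      obtain ⟨k, hk, lam, φ, hφ, heq, hrr⟩ := hcon (1/(j+1 : ℝ)) (by positivity)
      refine ⟨k, lam, ‖φ‖⁻¹ • φ, hk, ?_, ?_, hrr⟩
      · rw [norm_smul, norm_inv, norm_norm, inv_mul_cancel₀ (norm_ne_zero_iff.mpr hφ)]
      · rw [Matrix.mulVec_smul, heq, smul_comm]
    choose k lam φ hk hφ1 heig hrre using hseq
    have hφne : ∀ j, φ j ≠ 0 := by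
      intro j h
      have := hφ1 j
      rw [h, norm_zero] at this
      exact zero_ne_one this
    -- normalization of frequencies
    set kr : ℕ → Fin 3 → ℝ := fun j i => (k j i : ℝ) with hkrdef
    set r : ℕ → ℝ := fun j => Real.sqrt (∑ i, (kr j i)^2) with hrdef
    have hrsq : ∀ j, (r j)^2 = ∑ i, (kr j i)^2 := fun j =>
      Real.sq_sqrt (Finset.sum_nonneg fun i _ => sq_nonneg _)
    have hr1 : ∀ j, 1 ≤ r j := by
      intro j
      obtain ⟨i, hi⟩ := Function.ne_iff.mp (hk j)
      have hi' : k j i ≠ 0 := by simpa using hi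
      have h1 : (1:ℝ) ≤ |(k j i : ℝ)| := by exact_mod_cast Int.one_le_abs hi'
      have h2 : (1:ℝ) ≤ (kr j i)^2 := by
        have := sq_abs ((k j i : ℝ))
        nlinarith
      have h3 : (1:ℝ) ≤ ∑ i, (kr j i)^2 :=
        h2.trans (Finset.single_le_sum (fun i _ => sq_nonneg (kr j i)) (Finset.mem_univ i))
      calc (1:ℝ) = Real.sqrt 1 := Real.sqrt_one.symm
        _ ≤ r j := Real.sqrt_le_sqrt h3
    have hr0 : ∀ j, 0 < r j := fun j => lt_of_lt_of_le one_pos (hr1 j)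
    have hrC : ∀ j, ((r j : ℝ) : ℂ) ≠ 0 := fun j => by
      simpa using Complex.ofReal_ne_zero.mpr (hr0 j).ne'
    set v : ℕ → Fin 3 → ℝ := fun j => (r j)⁻¹ • kr j with hvdef
    have hv2 : ∀ j, ∑ i, (v j i)^2 = 1 := by
      intro j
      simp only [hvdef, Pi.smul_apply, smul_eq_mul, mul_pow, ← Finset.mul_sum]
      rw [← hrsq j, inv_pow]
      exact inv_mul_cancel₀ (pow_ne_zero _ (hr0 j).ne')
    have hvle : ∀ j i, |v j i| ≤ 1 := by
      intro j i
      have h2 : (v j i)^2 ≤ 1 := by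
        rw [← hv2 j]
        exact Finset.single_le_sum (fun i _ => sq_nonneg (v j i)) (Finset.mem_univ i)
      exact (sq_le_one_iff_abs_le_one _).mp h2
    -- the rescaled symbol
    set SR : (Fin 3 → ℝ) → Matrix (Fin n) (Fin n) ℂ := fun w =>
      ((w 0 : ℝ) : ℂ) • N1 + ((w 1 : ℝ) : ℂ) • N2 + ((w 2 : ℝ) : ℂ) • N3 with hSRdef
    have hsc : ∀ (j : ℕ) (i : Fin 3), ((r j : ℝ) : ℂ) * ((v j i : ℝ) : ℂ) = ((k j i : ℤ) : ℂ) := by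
      intro j i
      have hv : v j i = (r j)⁻¹ * (k j i : ℝ) := rfl
      rw [hv]
      push_cast
      field_simp
      rw [mul_comm, mul_div_assoc, div_self (hrC j), mul_one]
    have hscale : ∀ j, ((r j : ℝ) : ℂ) • SR (v j) = symbolZ N1 N2 N3 (k j) := by
      intro j
      simp only [hSRdef, smul_add, smul_smul, hsc, symbolZ]
    -- the rescaled eigenvalue equation
    set μ : ℕ → ℂ := fun j => lam j / ((r j : ℝ) : ℂ) with hμdef
    have heq2 : ∀ j, Complex.I • (SR (v j) *ᵥ φ j) - μ j • (N *ᵥ φ j)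
        = (((r j : ℝ) : ℂ))⁻¹ • (I0 *ᵥ φ j) := by
      intro j
      have hw := hweight (k j) (lam j) (φ j) (heig j)
      rw [← hscale j] at hw
      rw [Matrix.sub_mulVec, Matrix.smul_mulVec, Matrix.smul_mulVec] at hw
      have hw3 : I0 *ᵥ φ j
          = Complex.I • (((r j : ℝ) : ℂ) • (SR (v j) *ᵥ φ j)) - lam j • (N *ᵥ φ j) := by
        have h4 := sub_eq_iff_eq_add.mp hw
        rw [h4]; abel
      rw [hw3, smul_sub, smul_smul, smul_smul, smul_smul]
      rw [show ((r j : ℝ) : ℂ)⁻¹ * Complex.I * ((r j : ℝ) : ℂ) = Complex.I by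
        rw [mul_comm _ Complex.I, mul_assoc, inv_mul_cancel₀ (hrC j), mul_one]]
      rw [show ((r j : ℝ) : ℂ)⁻¹ * lam j = lam j / ((r j : ℝ) : ℂ) by
        rw [div_eq_inv_mul]]
    -- bounds on the quadratic forms
    set CS : ℝ := ∑ a : Fin n, ∑ b : Fin n, (‖N1 a b‖ + ‖N2 a b‖ + ‖N3 a b‖) with hCSdef
    set CI : ℝ := ∑ a : Fin n, ∑ b : Fin n, ‖I0 a b‖ with hCIdef
    set CN : ℝ := ∑ a : Fin n, ∑ b : Fin n, ‖N a b‖ with hCNdef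
    have hSRentry : ∀ (j : ℕ) (a b : Fin n),
        ‖SR (v j) a b‖ ≤ ‖N1 a b‖ + ‖N2 a b‖ + ‖N3 a b‖ := by
      intro j a b
      have hentry : SR (v j) a b = ((v j 0 : ℝ) : ℂ) * N1 a b
          + ((v j 1 : ℝ) : ℂ) * N2 a b + ((v j 2 : ℝ) : ℂ) * N3 a b := by
        simp [hSRdef, Matrix.add_apply, Matrix.smul_apply, smul_eq_mul]
      rw [hentry]
      have hterm : ∀ (i : Fin 3) (M : Matrix (Fin n) (Fin n) ℂ),
          ‖((v j i : ℝ) : ℂ) * M a b‖ ≤ ‖M a b‖ := by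
        intro i M
        rw [norm_mul, Complex.norm_real, Real.norm_eq_abs]
        calc |v j i| * ‖M a b‖ ≤ 1 * ‖M a b‖ :=
              mul_le_mul_of_nonneg_right (hvle j i) (norm_nonneg _)
          _ = ‖M a b‖ := one_mul _
      calc ‖((v j 0 : ℝ) : ℂ) * N1 a b + ((v j 1 : ℝ) : ℂ) * N2 a b
            + ((v j 2 : ℝ) : ℂ) * N3 a b‖
          ≤ ‖((v j 0 : ℝ) : ℂ) * N1 a b + ((v j 1 : ℝ) : ℂ) * N2 a b‖
            + ‖((v j 2 : ℝ) : ℂ) * N3 a b‖ := norm_add_le _ _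
        _ ≤ (‖((v j 0 : ℝ) : ℂ) * N1 a b‖ + ‖((v j 1 : ℝ) : ℂ) * N2 a b‖)
            + ‖((v j 2 : ℝ) : ℂ) * N3 a b‖ := by
              gcongr
              exact norm_add_le _ _
        _ ≤ (‖N1 a b‖ + ‖N2 a b‖) + ‖N3 a b‖ := by
              gcongr <;> [exact hterm 0 N1; exact hterm 1 N2; exact hterm 2 N3]
        _ = ‖N1 a b‖ + ‖N2 a b‖ + ‖N3 a b‖ := by ring
    have hqS : ∀ j, ‖star (φ j) ⬝ᵥ SR (v j) *ᵥ φ j‖ ≤ CS := by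
      intro j
      calc ‖star (φ j) ⬝ᵥ SR (v j) *ᵥ φ j‖
          ≤ (∑ a, ∑ b, ‖SR (v j) a b‖) * (‖φ j‖ * ‖φ j‖) := quad_bound _ _
        _ ≤ CS * (1 * 1) := by
            rw [hφ1 j]
            exact mul_le_mul_of_nonneg_right (Finset.sum_le_sum fun a _ =>
              Finset.sum_le_sum fun b _ => hSRentry j a b) (by norm_num)
        _ = CS := by ring
    have hqIb : ∀ j, ‖star (φ j) ⬝ᵥ I0 *ᵥ φ j‖ ≤ CI := by
      intro j
      have := quad_bound I0 (φ j)
      rw [hφ1 j] at this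
      simpa using this
    have hqNb : ∀ j, ‖star (φ j) ⬝ᵥ N *ᵥ φ j‖ ≤ CN := by
      intro j
      have := quad_bound N (φ j)
      rw [hφ1 j] at this
      simpa using this
    -- the quadratic form of N is real and equals its norm
    have hqNreal : ∀ ψ : Fin n → ℂ,
        (star ψ ⬝ᵥ N *ᵥ ψ) = (((star ψ ⬝ᵥ N *ᵥ ψ).re : ℝ) : ℂ) := by
      intro ψ
      exact Complex.ext (by simp) (by simp [quad_im_zero hN.1 ψ])
    -- bound on μ
    have hμb : ∀ j, ‖μ j‖ ≤ (CS + CI) / c := by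
      intro j
      have hdot : Complex.I * (star (φ j) ⬝ᵥ SR (v j) *ᵥ φ j)
          - μ j * (star (φ j) ⬝ᵥ N *ᵥ φ j)
          = ((r j : ℝ) : ℂ)⁻¹ * (star (φ j) ⬝ᵥ I0 *ᵥ φ j) := by
        have := congrArg (fun w => star (φ j) ⬝ᵥ w) (heq2 j)
        simpa [dotProduct_sub, dotProduct_smul, smul_eq_mul] using this
      have h5 : μ j * (star (φ j) ⬝ᵥ N *ᵥ φ j)
          = Complex.I * (star (φ j) ⬝ᵥ SR (v j) *ᵥ φ j)
            - ((r j : ℝ) : ℂ)⁻¹ * (star (φ j) ⬝ᵥ I0 *ᵥ φ j) := by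
        rw [← hdot]; ring
      have h6 : ‖μ j * (star (φ j) ⬝ᵥ N *ᵥ φ j)‖ ≤ CS + CI := by
        rw [h5]
        calc ‖Complex.I * (star (φ j) ⬝ᵥ SR (v j) *ᵥ φ j)
              - ((r j : ℝ) : ℂ)⁻¹ * (star (φ j) ⬝ᵥ I0 *ᵥ φ j)‖
            ≤ ‖Complex.I * (star (φ j) ⬝ᵥ SR (v j) *ᵥ φ j)‖
              + ‖((r j : ℝ) : ℂ)⁻¹ * (star (φ j) ⬝ᵥ I0 *ᵥ φ j)‖ := norm_sub_le _ _
          _ ≤ CS + CI := by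
              apply add_le_add
              · rw [norm_mul, Complex.norm_I, one_mul]
                exact hqS j
              · rw [norm_mul]
                calc ‖((r j : ℝ) : ℂ)⁻¹‖ * ‖star (φ j) ⬝ᵥ I0 *ᵥ φ j‖
                    ≤ 1 * CI := by
                      apply mul_le_mul _ (hqIb j) (norm_nonneg _) zero_le_one
                      rw [norm_inv, Complex.norm_real, Real.norm_eq_abs,
                        abs_of_pos (hr0 j)]
                      exact inv_le_one_of_one_le₀ (hr1 j)
                  _ = CI := one_mul _
      have h7 : c ≤ (star (φ j) ⬝ᵥ N *ᵥ φ j).re := hcle (φ j) (hφ1 j)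
      have h8 : ‖μ j * (star (φ j) ⬝ᵥ N *ᵥ φ j)‖
          = ‖μ j‖ * (star (φ j) ⬝ᵥ N *ᵥ φ j).re := by
        rw [norm_mul]
        congr 1
        rw [hqNreal (φ j), Complex.norm_real, Real.norm_eq_abs, abs_of_pos
          (hqNpos (φ j) (hφne j)), Complex.ofReal_re]
      rw [h8] at h6
      rw [le_div_iff₀ hcpos]
      calc ‖μ j‖ * c ≤ ‖μ j‖ * (star (φ j) ⬝ᵥ N *ᵥ φ j).re :=
            mul_le_mul_of_nonneg_left h7 (norm_nonneg _)
        _ ≤ CS + CI := h6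
    -- compactness: extract a convergent subsequence
    have hCSnn : 0 ≤ CS := Finset.sum_nonneg fun a _ => Finset.sum_nonneg fun b _ => by
      positivity
    have hCInn : 0 ≤ CI := Finset.sum_nonneg fun a _ => Finset.sum_nonneg fun b _ =>
      norm_nonneg _
    set B : ℝ := (CS + CI) / c with hBdef
    set R : ℝ := max B 1 with hRdef
    set x : ℕ → ℂ × (Fin 3 → ℝ) × (Fin n → ℂ) := fun j => (μ j, v j, φ j) with hxdef
    have hvnorm : ∀ j, ‖v j‖ ≤ 1 := by
      intro j
      refine pi_norm_le_iff_of_nonneg zero_le_one |>.mpr fun i => ?_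
      rw [Real.norm_eq_abs]
      exact hvle j i
    have hmem : ∀ j, x j ∈ Metric.closedBall (0 : ℂ × (Fin 3 → ℝ) × (Fin n → ℂ)) R := by
      intro j
      rw [Metric.mem_closedBall, dist_zero_right]
      rw [Prod.norm_def, Prod.norm_def]
      apply max_le
      · exact (hμb j).trans (le_max_left _ _)
      · apply max_le
        · exact (hvnorm j).trans (le_max_right _ _)
        · rw [hφ1 j]; exact le_max_right _ _
    obtain ⟨a, -, σ, hσ, htend⟩ :=
      tendsto_subseq_of_bounded Metric.isBounded_closedBall hmem
    -- component limits
    have hμt : Filter.Tendsto (fun j' => μ (σ j')) Filter.atTop (nhds a.1) :=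
      (continuous_fst.tendsto a).comp htend
    have hvt : Filter.Tendsto (fun j' => v (σ j')) Filter.atTop (nhds a.2.1) :=
      ((continuous_fst.comp continuous_snd).tendsto a).comp htend
    have hψt : Filter.Tendsto (fun j' => φ (σ j')) Filter.atTop (nhds a.2.2) :=
      ((continuous_snd.comp continuous_snd).tendsto a).comp htend
    -- the limit vector has norm one
    have hψnorm : ‖a.2.2‖ = 1 := by
      have h1 : Filter.Tendsto (fun j' => ‖φ (σ j')‖) Filter.atTop (nhds ‖a.2.2‖) :=
        (continuous_norm.tendsto a.2.2).comp hψt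
      have h2 : Filter.Tendsto (fun j' => ‖φ (σ j')‖) Filter.atTop (nhds 1) := by
        simp only [hφ1]
        exact tendsto_const_nhds
      exact tendsto_nhds_unique h1 h2
    have hψne : a.2.2 ≠ 0 := by
      intro h
      rw [h, norm_zero] at hψnorm
      exact zero_ne_one hψnorm
    -- the limit direction has Euclidean length one
    have hvsum : ∑ i, (a.2.1 i)^2 = 1 := by
      have hcont : Continuous fun w : Fin 3 → ℝ => ∑ i, (w i)^2 :=
        continuous_finset_sum _ fun i _ => (continuous_apply i).pow 2
      have h1 : Filter.Tendsto (fun j' => ∑ i, (v (σ j') i)^2) Filter.atTop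
          (nhds (∑ i, (a.2.1 i)^2)) := (hcont.tendsto a.2.1).comp hvt
      have h2 : Filter.Tendsto (fun j' => ∑ i, (v (σ j') i)^2) Filter.atTop (nhds 1) := by
        simp only [hv2]
        exact tendsto_const_nhds
      exact tendsto_nhds_unique h1 h2
    -- the limit vector is a momentary equilibrium state
    have hI0ψ : I0 *ᵥ a.2.2 = 0 := by
      have hqIre : ∀ j, (star (φ j) ⬝ᵥ I0 *ᵥ φ j).re
          = -(lam j).re * (star (φ j) ⬝ᵥ N *ᵥ φ j).re := by
        intro j
        have h1 := (eig_parts (hSherm (k j)) hN.1 hI0.1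
          (hweight (k j) (lam j) (φ j) (heig j))).1
        linarith
      have hub : ∀ j, (star (φ j) ⬝ᵥ I0 *ᵥ φ j).re ≤ (1 / ((j : ℝ) + 1)) * CN := by
        intro j
        rw [hqIre j]
        have h2 : -(lam j).re < 1 / ((j : ℝ) + 1) := by
          have := hrre j
          linarith
        have h3 : 0 ≤ (star (φ j) ⬝ᵥ N *ᵥ φ j).re := (hqNpos (φ j) (hφne j)).le
        have h4 : (star (φ j) ⬝ᵥ N *ᵥ φ j).re ≤ CN := by
          have := hqNb j
          calc (star (φ j) ⬝ᵥ N *ᵥ φ j).re ≤ ‖star (φ j) ⬝ᵥ N *ᵥ φ j‖ :=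
            Complex.re_le_norm _
          _ ≤ CN := hqNb j
        have h5 : (lam j).re ≤ 0 := hbasic (k j) (lam j) (φ j) (hφne j) (heig j)
        have h6 : (0:ℝ) < 1 / ((j : ℝ) + 1) := by positivity
        nlinarith
      have hlb : ∀ j, 0 ≤ (star (φ j) ⬝ᵥ I0 *ᵥ φ j).re := fun j => hqInn (φ j)
      -- squeeze along the subsequence
      have hg : Filter.Tendsto (fun j' => (1 / ((σ j' : ℝ) + 1)) * CN) Filter.atTop
          (nhds 0) := by
        have h5 : Filter.Tendsto (fun j' : ℕ => 1 / ((σ j' : ℝ) + 1)) Filter.atTop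
            (nhds 0) :=
          tendsto_one_div_add_atTop_nhds_zero_nat.comp hσ.tendsto_atTop
        simpa using h5.mul_const CN
      have hsq : Filter.Tendsto (fun j' => (star (φ (σ j')) ⬝ᵥ I0 *ᵥ φ (σ j')).re)
          Filter.atTop (nhds 0) :=
        squeeze_zero (fun j' => hlb (σ j')) (fun j' => hub (σ j')) hg
      have hqIt : Filter.Tendsto (fun j' => (star (φ (σ j')) ⬝ᵥ I0 *ᵥ φ (σ j')).re)
          Filter.atTop (nhds ((star a.2.2 ⬝ᵥ I0 *ᵥ a.2.2).re)) :=
        ((Complex.continuous_re.comp (continuous_quad I0)).tendsto a.2.2).comp hψt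
      have hre0 : (star a.2.2 ⬝ᵥ I0 *ᵥ a.2.2).re = 0 := tendsto_nhds_unique hqIt hsq
      have hz0 : star a.2.2 ⬝ᵥ I0 *ᵥ a.2.2 = 0 :=
        Complex.ext (by simpa using hre0) (by simpa using quad_im_zero hI0.1 a.2.2)
      exact (hI0.dotProduct_mulVec_zero_iff a.2.2).mp hz0
    -- pass to the limit in the rescaled eigenvalue equation
    set G : ℂ × (Fin 3 → ℝ) × (Fin n → ℂ) → (Fin n → ℂ) := fun p =>
      Complex.I • (SR p.2.1 *ᵥ p.2.2) - p.1 • (N *ᵥ p.2.2) with hGdef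
    have hGc : Continuous G := by
      apply continuous_pi
      intro i
      have hform : (fun p : ℂ × (Fin 3 → ℝ) × (Fin n → ℂ) => G p i)
          = fun p => Complex.I * (∑ b, (((p.2.1 0 : ℝ) : ℂ) * N1 i b
              + ((p.2.1 1 : ℝ) : ℂ) * N2 i b + ((p.2.1 2 : ℝ) : ℂ) * N3 i b) * p.2.2 b)
            - p.1 * (∑ b, N i b * p.2.2 b) := by
        funext p
        simp [hGdef, hSRdef, Matrix.mulVec, dotProduct, Matrix.add_apply,
          Matrix.smul_apply, smul_eq_mul, Pi.sub_apply, Pi.smul_apply]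
      rw [hform]
      have cR : ∀ i3 : Fin 3, Continuous fun p : ℂ × (Fin 3 → ℝ) × (Fin n → ℂ) =>
          ((p.2.1 i3 : ℝ) : ℂ) := fun i3 =>
        Complex.continuous_ofReal.comp ((continuous_apply i3).comp
          (continuous_fst.comp continuous_snd))
      have cψ : ∀ b : Fin n, Continuous fun p : ℂ × (Fin 3 → ℝ) × (Fin n → ℂ) =>
          p.2.2 b := fun b =>
        (continuous_apply b).comp (continuous_snd.comp continuous_snd)
      apply Continuous.sub
      · exact continuous_const.mul (continuous_finset_sum _ fun b _ =>
          Continuous.mul (((((cR 0).mul continuous_const).add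
            ((cR 1).mul continuous_const)).add ((cR 2).mul continuous_const))) (cψ b))
      · exact continuous_fst.mul (continuous_finset_sum _ fun b _ =>
          continuous_const.mul (cψ b))
    have hGx : ∀ j, G (x j) = ((r j : ℝ) : ℂ)⁻¹ • (I0 *ᵥ φ j) := fun j => heq2 j
    -- RHS tends to zero
    have hI0t : Filter.Tendsto (fun j' => ‖I0 *ᵥ φ (σ j')‖) Filter.atTop (nhds 0) := by
      have h1 : Filter.Tendsto (fun j' => I0 *ᵥ φ (σ j')) Filter.atTop
          (nhds (I0 *ᵥ a.2.2)) := ((continuous_mulVec' I0).tendsto a.2.2).comp hψt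
      rw [hI0ψ] at h1
      simpa using h1.norm
    have hRHS : Filter.Tendsto (fun j' => ((r (σ j') : ℝ) : ℂ)⁻¹ • (I0 *ᵥ φ (σ j')))
        Filter.atTop (nhds 0) := by
      apply squeeze_zero_norm _ hI0t
      intro j'
      rw [norm_smul, norm_inv, Complex.norm_real, Real.norm_eq_abs,
        abs_of_pos (hr0 (σ j'))]
      calc (r (σ j'))⁻¹ * ‖I0 *ᵥ φ (σ j')‖ ≤ 1 * ‖I0 *ᵥ φ (σ j')‖ :=
            mul_le_mul_of_nonneg_right (inv_le_one_of_one_le₀ (hr1 (σ j')))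
              (norm_nonneg _)
        _ = ‖I0 *ᵥ φ (σ j')‖ := one_mul _
    -- LHS tends to G a
    have hLHS : Filter.Tendsto (fun j' => G (x (σ j'))) Filter.atTop (nhds (G a)) :=
      (hGc.tendsto a).comp htend
    have hGa : G a = 0 := by
      apply tendsto_nhds_unique hLHS
      have : (fun j' => G (x (σ j')))
          = fun j' => ((r (σ j') : ℝ) : ℂ)⁻¹ • (I0 *ᵥ φ (σ j')) := funext fun j' => hGx (σ j')
      rw [this]
      exact hRHS
    -- the limit equation contradicts Condition (3)
    have hfin : ((-a.1) • N + Complex.I • SR a.2.1) *ᵥ a.2.2 = 0 := by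
      have hGa' : Complex.I • (SR a.2.1 *ᵥ a.2.2) - a.1 • (N *ᵥ a.2.2) = 0 := hGa
      rw [Matrix.add_mulVec, Matrix.smul_mulVec, Matrix.smul_mulVec]
      have : (-a.1) • (N *ᵥ a.2.2) + Complex.I • (SR a.2.1 *ᵥ a.2.2)
          = Complex.I • (SR a.2.1 *ᵥ a.2.2) - a.1 • (N *ᵥ a.2.2) := by
        rw [neg_smul]; abel
      rw [this, hGa']
    set nh : EuclideanSpace ℝ (Fin 3) := (WithLp.equiv 2 (Fin 3 → ℝ)).symm a.2.1
      with hnhdef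
    have hnhapp : ∀ i, nh i = a.2.1 i := fun i => rfl
    have hnh : ‖nh‖ = 1 := by
      rw [EuclideanSpace.norm_eq]
      have : ∀ i, ‖nh i‖ ^ 2 = (a.2.1 i) ^ 2 := by
        intro i
        rw [hnhapp, Real.norm_eq_abs, sq_abs]
      rw [Finset.sum_congr rfl fun i _ => this i, hvsum, Real.sqrt_one]
    have hfinal := hcond3 (-a.1) nh hnh a.2.2 hI0ψ ?_
    · exact hψne hfinal
    · have : ((nh 0 : ℝ) : ℂ) • N1 + ((nh 1 : ℝ) : ℂ) • N2 + ((nh 2 : ℝ) : ℂ) • N3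
          = SR a.2.1 := by
        rw [hnhapp 0, hnhapp 1, hnhapp 2]
      rw [this]
      exact hfin
  obtain ⟨δ0, hδ0pos, hδ0⟩ := hδ0
  obtain ⟨δ1, hδ1pos, hδ1⟩ := hδ1
  refine ⟨min δ0 δ1, lt_min hδ0pos hδ1pos, ?_, ?_⟩
  · rintro k hk lam ⟨φ, hφ, h⟩
    exact (hδ1 k hk lam φ hφ h).trans (by simp [min_le_right])
  · rintro lam hlam
    by_cases h0 : lam = 0
    · exact Or.inl h0
    · exact Or.inr ⟨(hb lam hlam).1, (hδ0 lam hlam h0).trans (by simp [min_le_left])⟩
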